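/- arXiv:math/9611219 — 3 statements merged into one kernel-verified Lean document; each statement's English description precedes it below -/
import Mathlib

section
/- Every compact subgroup of the nilradical of a connected Lie group G is central in G. -/
open scoped Manifold
open Set Topology Filter
open scoped commutatorElement

/-- A Lie group has no small subgroups. -/
theorem exists_nss_aux {E : Type*} [NormedAddCommGroup E] [NormedSpace ℝ E]
    {G : Type*} [Group G] [TopologicalSpace G] [IsTopologicalGroup G] [ChartedSpace E G]
    [LieGroup 𝓘(ℝ, E) (⊤ : ℕ∞) G] :
    ∃ U ∈ 𝓝 (1 : G), ∀ H : Subgroup G, (H : Set G) ⊆ U → H = ⊥ := by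
  classical
  set e := extChartAt 𝓘(ℝ, E) (1 : G) with he
  set c₀ : E := e 1 with hc₀
  set m : E × E → E := fun p => e (e.symm p.1 * e.symm p.2) with hmdef
  -- smoothness of multiplication, read in the chart
  have hmul : ContMDiffAt (𝓘(ℝ, E).prod 𝓘(ℝ, E)) 𝓘(ℝ, E) 1
      (fun p : G × G => p.1 * p.2) (1, 1) :=
    (contMDiff_mul 𝓘(ℝ, E) ((⊤ : ℕ∞) : WithTop ℕ∞)).contMDiffAt.of_le (by exact_mod_cast le_top)
  rw [contMDiffAt_iff] at hmul
  obtain ⟨-, hmd⟩ := hmul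
  have hrange : range (𝓘(ℝ, E).prod 𝓘(ℝ, E)) = univ :=
    ModelWithCorners.range_eq_univ _
  rw [hrange, contDiffWithinAt_univ] at hmd
  simp only [extChartAt_prod, one_mul, PartialEquiv.prod_symm, PartialEquiv.prod_coe,
    PartialEquiv.prod_coe_symm, Function.comp_def] at hmd
  -- now hmd should be about m at (c₀, c₀)
  have hmd' : ContDiffAt ℝ 1 m (c₀, c₀) := hmd
  clear hmd
  set D := fderiv ℝ m (c₀, c₀) with hD
  have hstrict : HasStrictFDerivAt m D (c₀, c₀) := hmd'.hasStrictFDerivAt one_ne_zero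
  have hsource : (1 : G) ∈ e.source := mem_extChartAt_source (I := 𝓘(ℝ, E)) 1
  have hsymm1 : e.symm c₀ = 1 := e.left_inv hsource
  have htgt : c₀ ∈ e.target := e.map_source hsource
  have htgtopen : IsOpen e.target := isOpen_extChartAt_target (I := 𝓘(ℝ, E)) 1
  -- m (x, c₀) = x near c₀
  have hleft : ∀ᶠ x in 𝓝 c₀, m (x, c₀) = x := by
    filter_upwards [htgtopen.mem_nhds htgt] with x hx
    simp [m, hsymm1, e.right_inv hx]
  have hright : ∀ᶠ x in 𝓝 c₀, m (c₀, x) = x := by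
    filter_upwards [htgtopen.mem_nhds htgt] with x hx
    simp [m, hsymm1, e.right_inv hx]
  -- derivative is (u, v) ↦ u + v
  have hDleft : ∀ u : E, D (u, 0) = u := by
    have hg : HasFDerivAt (fun x : E => ((x, c₀) : E × E))
        ((ContinuousLinearMap.id ℝ E).prod 0) c₀ :=
      HasFDerivAt.prodMk (hasFDerivAt_id c₀) (hasFDerivAt_const c₀ c₀)
    have h1 : HasFDerivAt (m ∘ fun x : E => ((x, c₀) : E × E))
        (D.comp ((ContinuousLinearMap.id ℝ E).prod 0)) c₀ :=
      hstrict.hasFDerivAt.comp (f := fun x : E => ((x, c₀) : E × E)) c₀ hg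
    have h2 : HasFDerivAt (fun x : E => x)
        (D.comp ((ContinuousLinearMap.id ℝ E).prod 0)) c₀ :=
      h1.congr_of_eventuallyEq (hleft.mono fun x hx => hx.symm)
    have h3 := h2.unique (hasFDerivAt_id c₀)
    intro u
    have := congrArg (fun (T : E →L[ℝ] E) => T u) h3
    simpa using this
  have hDright : ∀ u : E, D (0, u) = u := by
    have hg : HasFDerivAt (fun x : E => ((c₀, x) : E × E))
        ((0 : E →L[ℝ] E).prod (ContinuousLinearMap.id ℝ E)) c₀ :=
      HasFDerivAt.prodMk (hasFDerivAt_const c₀ c₀) (hasFDerivAt_id c₀)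
    have h1 : HasFDerivAt (m ∘ fun x : E => ((c₀, x) : E × E))
        (D.comp ((0 : E →L[ℝ] E).prod (ContinuousLinearMap.id ℝ E))) c₀ :=
      hstrict.hasFDerivAt.comp (f := fun x : E => ((c₀, x) : E × E)) c₀ hg
    have h2 : HasFDerivAt (fun x : E => x)
        (D.comp ((0 : E →L[ℝ] E).prod (ContinuousLinearMap.id ℝ E))) c₀ :=
      h1.congr_of_eventuallyEq (hright.mono fun x hx => hx.symm)
    have h3 := h2.unique (hasFDerivAt_id c₀)
    intro u
    have := congrArg (fun (T : E →L[ℝ] E) => T u) h3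
    simpa using this
  have hDadd : ∀ u v : E, D (u, v) = u + v := by
    intro u v
    have h : (u, v) = (u, (0 : E)) + ((0 : E), v) := by simp
    rw [h, map_add, hDleft, hDright]
  -- the strict derivative estimate with ε = 1/4
  have hm0 : m (c₀, c₀) = c₀ := by simp [m, hsymm1, e.right_inv htgt]; rfl
  have hlo := hstrict.isLittleO.def (c := (1:ℝ)/4) (by norm_num)
  rw [Metric.eventually_nhds_iff] at hlo
  obtain ⟨δ, hδpos, hδ⟩ := hlo
  -- the candidate neighborhood
  have hcont : ContinuousAt e 1 := continuousAt_extChartAt (I := 𝓘(ℝ, E)) 1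
  have hUnhds : e.source ∩ e ⁻¹' Metric.ball c₀ (δ/2) ∈ 𝓝 (1 : G) := by
    apply Filter.inter_mem (extChartAt_source_mem_nhds (I := 𝓘(ℝ, E)) 1)
    exact hcont (Metric.ball_mem_nhds c₀ (by positivity))
  refine ⟨_, hUnhds, ?_⟩
  intro H hH
  rw [Subgroup.eq_bot_iff_forall]
  intro s hs
  -- key growth estimate for squaring
  have key : ∀ t : G, t ∈ H → (3/2) * ‖e t - c₀‖ ≤ ‖e (t * t) - c₀‖ := by
    intro t ht
    have h1 := hH ht
    have h2 := hH (H.mul_mem ht ht)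
    have htsrc : t ∈ e.source := h1.1
    have htball : e t ∈ Metric.ball c₀ (δ/2) := h1.2
    have hmt : m (e t, e t) = e (t * t) := by
      simp [m, e.left_inv htsrc]
    have hdist : dist (((e t, e t), ((c₀ : E), (c₀ : E))) : (E × E) × E × E)
        (((c₀, c₀), (c₀, c₀)) : (E × E) × E × E) < δ := by
      have hb : dist (e t) c₀ < δ/2 := htball
      have hlt : dist (e t) c₀ < δ := lt_of_lt_of_le hb (by linarith)
      simp [Prod.dist_eq, max_lt_iff, hδpos, hlt]
    have hest := hδ hdist
    rw [hmt, hm0] at hest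
    have hDval : D (((e t, e t) : E × E) - (c₀, c₀)) = (e t - c₀) + (e t - c₀) := by
      have h : ((e t, e t) : E × E) - (c₀, c₀) = (e t - c₀, e t - c₀) := rfl
      rw [h, hDadd]
    rw [hDval] at hest
    have hnorm : ‖(((e t, e t) : E × E) - ((c₀, c₀) : E × E))‖ = ‖e t - c₀‖ := by
      have h : ((e t, e t) : E × E) - (c₀, c₀) = (e t - c₀, e t - c₀) := rfl
      rw [h, Prod.norm_def]
      simp
    rw [hnorm] at hest
    have h3 := norm_sub_norm_le ((e t - c₀) + (e t - c₀)) (e (t * t) - c₀)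
    rw [norm_sub_rev ((e t - c₀) + (e t - c₀)) (e (t * t) - c₀)] at h3
    have h2n : ‖(e t - c₀) + (e t - c₀)‖ = 2 * ‖e t - c₀‖ := by
      rw [← two_smul ℝ (e t - c₀)]
      simp [norm_smul]
    have hnn : (0:ℝ) ≤ ‖e t - c₀‖ := norm_nonneg _
    linarith
  -- iterate squaring: s^(2^n)
  have hpow : ∀ n : ℕ, (3/2 : ℝ)^n * ‖e s - c₀‖ ≤ ‖e (s ^ (2^n)) - c₀‖ := by
    intro n
    induction n with
    | zero => simp
    | succ n ih =>
      have hmem : s ^ (2^n) ∈ H := H.pow_mem hs _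
      have hkey := key _ hmem
      have hsq : s ^ (2^n) * s ^ (2^n) = s ^ (2^(n+1)) := by
        rw [← pow_add]
        congr 1
        ring
      rw [hsq] at hkey
      have hnn : (0:ℝ) ≤ ‖e s - c₀‖ := norm_nonneg _
      calc (3/2 : ℝ)^(n+1) * ‖e s - c₀‖ = (3/2) * ((3/2)^n * ‖e s - c₀‖) := by ring
        _ ≤ (3/2) * ‖e (s ^ (2^n)) - c₀‖ := by nlinarith
        _ ≤ ‖e (s ^ (2^(n+1))) - c₀‖ := hkey
  -- but all iterates stay in the ball of radius δ/2
  have hbound : ∀ n : ℕ, ‖e (s ^ (2^n)) - c₀‖ < δ/2 := by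
    intro n
    have := (hH (H.pow_mem hs (2^n))).2
    simpa [Metric.mem_ball, dist_eq_norm] using this
  have hzero : ‖e s - c₀‖ = 0 := by
    by_contra hne
    have hpos : 0 < ‖e s - c₀‖ := lt_of_le_of_ne (norm_nonneg _) (Ne.symm hne)
    obtain ⟨n, hn⟩ := pow_unbounded_of_one_lt ((δ/2) / ‖e s - c₀‖)
      (by norm_num : (1:ℝ) < 3/2)
    have h1 := hpow n
    have h2 := hbound n
    rw [div_lt_iff₀ hpos] at hn
    linarith
  have heq : e s = e 1 := by
    have h : e s - c₀ = 0 := by rwa [norm_eq_zero] at hzero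
    rw [sub_eq_zero] at h
    rw [h, hc₀]
  exact e.injOn (hH hs).1 hsource heq

/-- Tube lemma for two-variable maps vanishing on `{1} × K`. -/
theorem tube_aux {G : Type*} [Group G] [TopologicalSpace G] [IsTopologicalGroup G]
    (f : G × G → G) (hf : Continuous f) (hf1 : ∀ x : G, f (1, x) = 1)
    {K : Set G} (hK : IsCompact K) {U : Set G} (hU : U ∈ 𝓝 (1 : G)) :
    ∃ V ∈ 𝓝 (1 : G), ∀ v ∈ V, ∀ x ∈ K, f (v, x) ∈ U := by
  obtain ⟨U', hU'sub, hU'o, hU'1⟩ := mem_nhds_iff.mp hU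
  have hopen : IsOpen {p : G × G | f p ∈ U'} := hU'o.preimage hf
  have hsub : ({1} : Set G) ×ˢ K ⊆ {p : G × G | f p ∈ U'} := by
    rintro ⟨v, x⟩ ⟨hv, hx⟩
    have hv1 : v = 1 := hv
    simp only [mem_setOf_eq, hv1, hf1 x]
    exact hU'1
  obtain ⟨V, W, hVo, hWo, hV1, hKW, hVW⟩ :=
    generalized_tube_lemma isCompact_singleton hK hopen hsub
  refine ⟨V, hVo.mem_nhds (hV1 rfl), ?_⟩
  intro v hv x hx
  exact hU'sub (hVW ⟨hv, hKW hx⟩)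

/-- Every compact subgroup of the nilradical (the largest connected nilpotent
normal subgroup) of a connected Lie group `G` is central in `G`. -/
theorem compact_subgroup_of_nilradical_is_central
    {E : Type*} [NormedAddCommGroup E] [NormedSpace ℝ E] [FiniteDimensional ℝ E]
    {G : Type*} [Group G] [TopologicalSpace G] [IsTopologicalGroup G] [ChartedSpace E G]
    [LieGroup 𝓘(ℝ, E) (⊤ : ℕ∞) G] [ConnectedSpace G]
    (N : Subgroup G) (hNnormal : N.Normal) (hNconn : IsConnected (N : Set G))
    (hNnil : Group.IsNilpotent N)
    (hNmax : ∀ M : Subgroup G, M.Normal → IsConnected (M : Set G) → Group.IsNilpotent M → M ≤ N)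
    (K : Subgroup G) (hKN : K ≤ N) (hK : IsCompact (K : Set G)) :
    K ≤ Subgroup.center G := by
  classical
  obtain ⟨U, hU, hNSS⟩ := exists_nss_aux (E := E) (G := G)
  obtain ⟨c, hc⟩ := hNnil.nilpotent'
  -- the upper central series of N, viewed inside G
  set L : ℕ → Subgroup G := fun i => (Subgroup.upperCentralSeries (↥N) i).map N.subtype with hLdef
  have hL0 : L 0 = ⊥ := by
    simp [L, Subgroup.upperCentralSeries_zero, Subgroup.map_bot]
  have hLc : L c = N := by
    rw [hLdef]
    simp only [hc]
    rw [← MonoidHom.range_eq_map, Subgroup.range_subtype]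
  have hLstep : ∀ (j : ℕ) (w x : G), w ∈ L (j + 1) → x ∈ N → ⁅w, x⁆ ∈ L j := by
    intro j w x hw hx
    obtain ⟨w', hw', hweq⟩ := hw
    have h := (Subgroup.mem_upperCentralSeries_succ_iff).mp hw' ⟨x, hx⟩
    refine ⟨w' * ⟨x, hx⟩ * w'⁻¹ * (⟨x, hx⟩)⁻¹, h, ?_⟩
    subst hweq
    simp [commutatorElement_def]
  have hmemN : ∀ (v y : G), y ∈ N → ⁅v, y⁆ ∈ N := by
    intro v y hy
    rw [commutatorElement_def]
    exact N.mul_mem (hNnormal.conj_mem y hy v) (N.inv_mem hy)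
  -- continuity of the commutator map
  have hcontc : Continuous fun p : G × G => ⁅p.1, p.2⁆ := by
    simp only [commutatorElement_def]
    fun_prop
  have hcont1 : ∀ x : G, ⁅(1 : G), x⁆ = 1 := fun x => commutatorElement_one_left x
  -- the key homomorphism-building step
  have step : ∀ (Lset : Subgroup G) (W : Set G),
      (∀ w ∈ W, w ∈ Lset → ∀ x ∈ (K : Set G), ⁅w, x⁆ = 1) →
      ∀ v : G, (∀ z ∈ (K : Set G), ⁅v, z⁆ ∈ U ∧ ⁅v, z⁆ ∈ W ∧ ⁅v, z⁆ ∈ Lset) →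
      ∀ x ∈ (K : Set G), ⁅v, x⁆ = 1 := by
    intro Lset W hW v hv
    have hdef : ∀ z z' : G, z ∈ K → z' ∈ K → ⁅v, z * z'⁆ = ⁅v, z⁆ * ⁅v, z'⁆ := by
      intro z z' hz hz'
      have hid : ⁅v, z * z'⁆ = ⁅v, z⁆ * (z * ⁅v, z'⁆ * z⁻¹) := by
        simp only [commutatorElement_def]
        group
      have h1 : ⁅⁅v, z'⁆, z⁆ = 1 := hW _ (hv z' hz').2.1 (hv z' hz').2.2 z hz
      have h2 : ⁅v, z'⁆ * z = z * ⁅v, z'⁆ :=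
        commutatorElement_eq_one_iff_mul_comm.mp h1
      have hcomm : z * ⁅v, z'⁆ * z⁻¹ = ⁅v, z'⁆ := by
        rw [← h2, mul_inv_cancel_right]
      rw [hid, hcomm]
    let θ : ↥K →* G :=
      { toFun := fun z => ⁅v, (z : G)⁆,
        map_one' := by simp,
        map_mul' := fun z z' => hdef z z' z.2 z'.2 }
    have hrange : (θ.range : Set G) ⊆ U := by
      rintro g ⟨z, rfl⟩
      exact (hv z z.2).1
    have hbot := hNSS θ.range hrange
    intro x hx
    have hx' : θ ⟨x, hx⟩ ∈ θ.range := ⟨⟨x, hx⟩, rfl⟩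
    rw [hbot, Subgroup.mem_bot] at hx'
    exact hx'
  -- the upward induction along the upper central series
  have down : ∀ j : ℕ, ∃ W ∈ 𝓝 (1 : G), ∀ w ∈ W, w ∈ L j →
      ∀ x ∈ (K : Set G), ⁅w, x⁆ = 1 := by
    intro j
    induction j with
    | zero =>
      refine ⟨univ, univ_mem, fun w _ hw x _ => ?_⟩
      rw [hL0, Subgroup.mem_bot] at hw
      rw [hw]
      exact commutatorElement_one_left x
    | succ j ih =>
      obtain ⟨W, hWnhds, hW⟩ := ih
      obtain ⟨W', hW'nhds, hW'⟩ := tube_aux (fun p : G × G => ⁅p.1, p.2⁆) hcontc hcont1 hK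
        (Filter.inter_mem hWnhds hU)
      refine ⟨W', hW'nhds, ?_⟩
      intro w hw hwL
      refine step (L j) W hW w ?_
      intro z hz
      have h := hW' w hw z hz
      exact ⟨h.2, h.1, hLstep j w z hwL (hKN hz)⟩
  -- conclusion: a neighborhood of 1 centralizing K
  obtain ⟨W, hWnhds, hW⟩ := down c
  rw [hLc] at hW
  obtain ⟨V, hVnhds, hV⟩ := tube_aux (fun p : G × G => ⁅p.1, p.2⁆) hcontc hcont1 hK
    (Filter.inter_mem hWnhds hU)
  have hVcomm : ∀ v ∈ V, ∀ x ∈ (K : Set G), ⁅v, x⁆ = 1 := by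
    intro v hv
    refine step N W hW v ?_
    intro z hz
    have h := hV v hv z hz
    exact ⟨h.2, h.1, hmemN v z (hKN hz)⟩
  -- the centralizer of K is open, hence clopen, hence everything
  set C := Subgroup.centralizer (K : Set G) with hCdef
  have hVC : V ⊆ (C : Set G) := by
    intro v hv
    rw [hCdef, SetLike.mem_coe, Subgroup.mem_centralizer_iff]
    intro h hh
    exact (commutatorElement_eq_one_iff_mul_comm.mp (hVcomm v hv h hh)).symm
  have hCopen : IsOpen (C : Set G) :=
    Subgroup.isOpen_of_mem_nhds C (mem_of_superset hVnhds hVC)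
  have hCclosed : IsClosed (C : Set G) := C.isClosed_of_isOpen hCopen
  have hCuniv : (C : Set G) = univ :=
    IsClopen.eq_univ ⟨hCclosed, hCopen⟩ ⟨1, C.one_mem⟩
  intro k hk
  rw [Subgroup.mem_center_iff]
  intro g
  have hg : g ∈ (C : Set G) := hCuniv ▸ mem_univ g
  exact (Subgroup.mem_centralizer_iff.mp hg k hk).symm
end

section
/- Every Zariski closed unipotent subgroup of GL_n(ℝ) is connected and simply connected (in the manifold topology). -/
open Matrix

/-- A subset of `GL n ℝ` is Zariski closed if it is the common zero set, within `GL n ℝ`,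
of a family of polynomials in the matrix entries. -/
def IsZariskiClosed {n : ℕ} (Z : Set (GL (Fin n) ℝ)) : Prop :=
  ∃ T : Set (MvPolynomial (Fin n × Fin n) ℝ),
    Z = {g : GL (Fin n) ℝ | ∀ p ∈ T,
      MvPolynomial.eval (fun ij => (g : Matrix (Fin n) (Fin n) ℝ) ij.1 ij.2) p = 0}

/-- A subgroup of `GL n ℝ` is unipotent if all its elements `u` satisfy `(u - 1)^n = 0`. -/
def IsUnipotentSubgroup {n : ℕ} (U : Subgroup (GL (Fin n) ℝ)) : Prop :=
  ∀ u ∈ U, ((u : Matrix (Fin n) (Fin n) ℝ) - 1) ^ n = 0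

namespace ZU
open Polynomial Finset

variable {n : ℕ}


/-- descending product formula -/
lemma descProd (m k : ℕ) :
    (∏ j ∈ Finset.range k, ((m : ℝ) - (j : ℝ))) = (Nat.factorial k : ℝ) * (m.choose k : ℝ) := by
  induction k with
  | zero => simp
  | succ k ih =>
    rw [Finset.prod_range_succ, ih]
    rcases le_or_gt (k + 1) m with h | h
    · have hk : (k : ℕ) ≤ m := Nat.le_of_succ_le h
      have hsub : ((m - k : ℕ) : ℝ) = (m : ℝ) - (k : ℝ) := by
        push_cast [Nat.cast_sub hk]; ring
      have hch := Nat.choose_succ_right_eq m k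
      -- m.choose (k+1) * (k+1) = m.choose k * (m - k)
      have : ((m.choose (k + 1) * (k + 1) : ℕ) : ℝ) = ((m.choose k * (m - k) : ℕ) : ℝ) := by
        rw [hch]
      push_cast [Nat.cast_sub hk] at this
      rw [Nat.factorial_succ]
      push_cast
      nlinarith [this]
    · have h1 : m.choose (k + 1) = 0 := Nat.choose_eq_zero_of_lt h
      rcases le_or_gt (k + 1) m with h2 | h2
      · omega
      · rcases Nat.lt_succ_iff_lt_or_eq.mp h2 with h3 | h3
        · have : m.choose k = 0 := Nat.choose_eq_zero_of_lt h3
          simp [h1, this]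
        · subst h3
          simp [h1]

noncomputable def coeffPoly (k : ℕ) : Polynomial ℝ :=
  Polynomial.C ((Nat.factorial k : ℝ)⁻¹) * ∏ j ∈ Finset.range k, (Polynomial.X - Polynomial.C (j : ℝ))

lemma coeffPoly_eval (k : ℕ) (t : ℝ) :
    (coeffPoly k).eval t = (Nat.factorial k : ℝ)⁻¹ * ∏ j ∈ Finset.range k, (t - (j : ℝ)) := by
  simp [coeffPoly, eval_prod]

lemma coeffPoly_eval_nat (k m : ℕ) :
    (coeffPoly k).eval (m : ℝ) = (m.choose k : ℝ) := by
  rw [coeffPoly_eval, descProd]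
  have : (Nat.factorial k : ℝ) ≠ 0 := by positivity
  field_simp



noncomputable def phi (n : ℕ) (A : Matrix (Fin n) (Fin n) ℝ) (t : ℝ) :
    Matrix (Fin n) (Fin n) ℝ :=
  ∑ k ∈ Finset.range n, ((coeffPoly k).eval t) • (A - 1) ^ k

lemma phi_nat (A : Matrix (Fin n) (Fin n) ℝ) (h : (A - 1) ^ n = 0) (m : ℕ) :
    phi n A (m : ℝ) = A ^ m := by
  set N := A - 1 with hN
  have hA : A = N + 1 := by rw [hN, sub_add_cancel]
  have hpow : ∀ k, n ≤ k → N ^ k = 0 := by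
    intro k hk
    calc N ^ k = N ^ n * N ^ (k - n) := by rw [← pow_add]; congr 1; omega
    _ = 0 := by rw [h, zero_mul]
  have hbin : A ^ m = ∑ k ∈ Finset.range (m + 1), ((m.choose k : ℝ)) • N ^ k := by
    rw [hA, (Commute.one_right N).add_pow]
    refine Finset.sum_congr rfl fun k _ => ?_
    rw [one_pow, mul_one, ← (Nat.cast_commute (m.choose k) (N ^ k)).eq,
      ← nsmul_eq_mul, ← Nat.cast_smul_eq_nsmul ℝ]
  have hphi : phi n A (m : ℝ) = ∑ k ∈ Finset.range n, ((m.choose k : ℝ)) • N ^ k := by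
    unfold phi
    exact Finset.sum_congr rfl fun k _ => by rw [coeffPoly_eval_nat]
  rw [hphi, hbin]
  have h1 : Finset.range n ⊆ Finset.range (max n (m + 1)) :=
    Finset.range_subset_range.2 (le_max_left _ _)
  have h2 : Finset.range (m + 1) ⊆ Finset.range (max n (m + 1)) :=
    Finset.range_subset_range.2 (le_max_right _ _)
  rw [Finset.sum_subset h1 ?h1z, Finset.sum_subset h2 ?h2z]
  case h1z =>
    intro k _ hk
    rw [Finset.mem_range, not_lt] at hk
    rw [hpow k hk, smul_zero]
  case h2z =>
    intro k _ hk
    rw [Finset.mem_range, not_lt] at hk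
    have : m.choose k = 0 := Nat.choose_eq_zero_of_lt hk
    rw [this, Nat.cast_zero, zero_smul]

noncomputable def Phi (n : ℕ) (A : Matrix (Fin n) (Fin n) ℝ) :
    Matrix (Fin n) (Fin n) (Polynomial ℝ) :=
  ∑ k ∈ Finset.range n, coeffPoly k • ((A - 1) ^ k).map Polynomial.C

lemma Phi_eval (A : Matrix (Fin n) (Fin n) ℝ) (t : ℝ) :
    (Phi n A).map (Polynomial.evalRingHom t) = phi n A t := by
  ext i j
  simp only [Phi, phi, Matrix.map_apply, Matrix.sum_apply, Matrix.smul_apply,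
    Matrix.map_apply, smul_eq_mul, coe_evalRingHom, eval_finset_sum, eval_mul, eval_C]

/-- a matrix `A` with `(A-1)^n = 0` has determinant 1 -/
lemma det_unipotent (A : Matrix (Fin n) (Fin n) ℝ) (h : (A - 1) ^ n = 0) :
    A.det = 1 := by
  set N := A - 1 with hN
  have hnil : IsNilpotent N := ⟨n, h⟩
  have hcp : N.charpoly = Polynomial.X ^ (Fintype.card (Fin n)) := by
    have := Matrix.isNilpotent_charpoly_sub_pow_of_isNilpotent hnil
    have h0 := this.eq_zero
    linear_combination (norm := ring_nf) h0
  have hmap : (charmatrix N).map (Polynomial.evalRingHom (-1 : ℝ)) = -A := by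
    ext i j
    by_cases hij : i = j
    · subst hij
      simp [charmatrix_apply_eq, hN, Matrix.sub_apply, Matrix.one_apply]
      ring
    · simp [charmatrix_apply_ne _ _ _ hij, hN, Matrix.sub_apply, Matrix.one_apply, hij]
  have : (Polynomial.evalRingHom (-1 : ℝ)) N.charpoly = (-A).det := by
    rw [Matrix.charpoly, RingHom.map_det, RingHom.mapMatrix_apply, hmap]
  rw [hcp] at this
  simp only [map_pow, coe_evalRingHom, eval_X, Fintype.card_fin, Matrix.det_neg] at this
  have hne : ((-1 : ℝ) ^ n) ≠ 0 := by
    simp [pow_ne_zero]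
  exact (mul_left_cancel₀ hne (by rw [mul_one, ← this])).symm

lemma poly_zero_of_nat_roots (q : Polynomial ℝ) (h : ∀ m : ℕ, q.eval (m : ℝ) = 0) :
    q = 0 := by
  refine q.eq_zero_of_infinite_isRoot ?_
  exact Set.infinite_of_injective_forall_mem (f := fun m : ℕ => (m : ℝ))
    Nat.cast_injective (fun m => h m)

lemma det_phi (A : Matrix (Fin n) (Fin n) ℝ) (h : (A - 1) ^ n = 0) (t : ℝ) :
    (phi n A t).det = 1 := by
  have hev : ∀ s : ℝ, (phi n A s).det = ((Phi n A).det).eval s := by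
    intro s
    rw [← Phi_eval A s, ← RingHom.mapMatrix_apply, ← RingHom.map_det, coe_evalRingHom]
  have hroots : ∀ m : ℕ, ((Phi n A).det - Polynomial.C 1).eval (m : ℝ) = 0 := by
    intro m
    rw [eval_sub, eval_C, ← hev, phi_nat A h, Matrix.det_pow, det_unipotent A h, one_pow,
      sub_self]
  have h0 := poly_zero_of_nat_roots _ hroots
  have : (Phi n A).det = Polynomial.C 1 := by linear_combination (norm := ring_nf) h0
  rw [hev, this, eval_C]

lemma eval_phi_zero (A : Matrix (Fin n) (Fin n) ℝ) (h : (A - 1) ^ n = 0)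
    (p : MvPolynomial (Fin n × Fin n) ℝ)
    (hm : ∀ m : ℕ, MvPolynomial.eval (fun ij => (A ^ m) ij.1 ij.2) p = 0) (t : ℝ) :
    MvPolynomial.eval (fun ij => (phi n A t) ij.1 ij.2) p = 0 := by
  set q : Polynomial ℝ :=
    MvPolynomial.eval₂ (Polynomial.C : ℝ →+* Polynomial ℝ)
      (fun ij => Phi n A ij.1 ij.2) p with hq
  have hcomp : ∀ s : ℝ, q.eval s =
      MvPolynomial.eval (fun ij => (phi n A s) ij.1 ij.2) p := by
    intro s
    have h1 := MvPolynomial.eval₂_comp_left (Polynomial.evalRingHom s)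
      (Polynomial.C : ℝ →+* Polynomial ℝ) (fun ij => Phi n A ij.1 ij.2) p
    have h2 : (Polynomial.evalRingHom s).comp (Polynomial.C : ℝ →+* Polynomial ℝ)
        = RingHom.id ℝ := by
      ext x; simp
    rw [h2] at h1
    have h3 : ∀ ij : Fin n × Fin n,
        (Polynomial.evalRingHom s) (Phi n A ij.1 ij.2) = (phi n A s) ij.1 ij.2 := by
      intro ij
      rw [← Phi_eval A s]
      rfl
    calc q.eval s = (Polynomial.evalRingHom s) q := rfl
      _ = MvPolynomial.eval₂ (RingHom.id ℝ)
            (fun ij => (Polynomial.evalRingHom s) (Phi n A ij.1 ij.2)) p := h1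
      _ = _ := by
          rw [MvPolynomial.eval₂_id]
          exact congrArg (fun f => (MvPolynomial.eval f) p) (funext h3)
  have hq0 : q = 0 := by
    refine poly_zero_of_nat_roots q fun m => ?_
    rw [hcomp, phi_nat A h]
    exact hm m
  rw [← hcomp, hq0, eval_zero]


end ZU


open ZU unitInterval

/-- Every Zariski closed unipotent subgroup of `GL n ℝ` is connected and
simply connected in the manifold topology. -/
theorem zariskiClosed_unipotent_subgroup_connected_simplyConnected
    {n : ℕ} (U : Subgroup (GL (Fin n) ℝ))
    (hZ : IsZariskiClosed (U : Set (GL (Fin n) ℝ))) (hU : IsUnipotentSubgroup U) :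
    IsConnected (U : Set (GL (Fin n) ℝ)) ∧ SimplyConnectedSpace U := by
  obtain ⟨T, hT⟩ := hZ
  have memIff : ∀ g : GL (Fin n) ℝ, g ∈ U ↔ ∀ p ∈ T,
      MvPolynomial.eval (fun ij => (g : Matrix (Fin n) (Fin n) ℝ) ij.1 ij.2) p = 0 := by
    intro g
    constructor
    · intro hg p hp
      have hg' : g ∈ (U : Set (GL (Fin n) ℝ)) := hg
      rw [hT] at hg'
      exact hg' p hp
    · intro hcond
      have : g ∈ (U : Set (GL (Fin n) ℝ)) := by rw [hT]; exact hcond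
      exact this
  have hnil : ∀ x : ↥U, (((x : GL (Fin n) ℝ) : Matrix (Fin n) (Fin n) ℝ) - 1) ^ n = 0 :=
    fun x => hU _ x.2
  have hdet1 : ∀ (x : ↥U) (t : ℝ),
      (phi n ((x : GL (Fin n) ℝ) : Matrix (Fin n) (Fin n) ℝ) t).det = 1 :=
    fun x t => det_phi _ (hnil x) t
  have hdetU : ∀ (x : ↥U) (t : ℝ),
      IsUnit (phi n ((x : GL (Fin n) ℝ) : Matrix (Fin n) (Fin n) ℝ) t).det :=
    fun x t => by rw [hdet1]; exact isUnit_one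
  let g : ↥U → ℝ → GL (Fin n) ℝ := fun x t =>
    Matrix.nonsingInvUnit (phi n ((x : GL (Fin n) ℝ) : Matrix (Fin n) (Fin n) ℝ) t)
      (hdetU x t)
  have hgval : ∀ x t, ((g x t : GL (Fin n) ℝ) : Matrix (Fin n) (Fin n) ℝ)
      = phi n ((x : GL (Fin n) ℝ) : Matrix (Fin n) (Fin n) ℝ) t := fun _ _ => rfl
  have hginv : ∀ x t, (((g x t)⁻¹ : GL (Fin n) ℝ) : Matrix (Fin n) (Fin n) ℝ)
      = (phi n ((x : GL (Fin n) ℝ) : Matrix (Fin n) (Fin n) ℝ) t).adjugate := by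
    intro x t
    show (phi n ((x : GL (Fin n) ℝ) : Matrix (Fin n) (Fin n) ℝ) t)⁻¹ = _
    rw [Matrix.inv_def, hdet1 x t, Ring.inverse_one, one_smul]
  have hgmem : ∀ x t, g x t ∈ U := by
    intro x t
    refine (memIff _).mpr fun p hp => ?_
    refine eval_phi_zero _ (hnil x) p (fun m => ?_) t
    have hxm : (x : GL (Fin n) ℝ) ^ m ∈ U := pow_mem x.2 m
    have h0 := (memIff _).mp hxm p hp
    rwa [Units.val_pow_eq_pow_val] at h0
  have hg1 : ∀ x : ↥U, g x 1 = (x : GL (Fin n) ℝ) := by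
    intro x
    apply Units.ext
    rw [hgval]
    have := phi_nat _ (hnil x) 1
    rw [Nat.cast_one] at this
    rw [this, pow_one]
  have hg0 : ∀ x : ↥U, g x 0 = 1 := by
    intro x
    apply Units.ext
    rw [hgval]
    have := phi_nat _ (hnil x) 0
    rw [Nat.cast_zero] at this
    rw [this, pow_zero]
    rfl
  -- continuity
  have hA : Continuous (fun p : I × ↥U =>
      phi n (((p.2 : GL (Fin n) ℝ)) : Matrix (Fin n) (Fin n) ℝ) (1 - (p.1 : ℝ))) := by
    unfold phi
    refine continuous_finset_sum _ fun k _ => ?_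
    refine Continuous.smul (f := fun p : I × ↥U => (coeffPoly k).eval (1 - (p.1 : ℝ)))
      (g := fun p : I × ↥U => (((p.2 : GL (Fin n) ℝ) : Matrix (Fin n) (Fin n) ℝ) - 1) ^ k) ?_ ?_
    · exact (Polynomial.continuous _).comp
        (continuous_const.sub (continuous_subtype_val.comp continuous_fst))
    · exact (((Units.continuous_val.comp
        (continuous_subtype_val.comp continuous_snd)).sub continuous_const).pow k)
  have hcont : Continuous (fun p : I × ↥U => g p.2 (1 - (p.1 : ℝ))) := by
    rw [Units.continuous_iff]
    constructor
    · exact hA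
    · have heq : (fun p : I × ↥U =>
          (((g p.2 (1 - (p.1 : ℝ)))⁻¹ : GL (Fin n) ℝ) : Matrix (Fin n) (Fin n) ℝ))
          = fun p : I × ↥U => (phi n (((p.2 : GL (Fin n) ℝ)) : Matrix (Fin n) (Fin n) ℝ)
              (1 - (p.1 : ℝ))).adjugate := by
        funext p
        exact hginv p.2 (1 - (p.1 : ℝ))
      rw [heq]
      exact hA.matrix_adjugate
  have hnull : (ContinuousMap.id ↥U).Nullhomotopic := by
    refine ⟨⟨1, U.one_mem⟩, ⟨{
      toFun := fun p => ⟨g p.2 (1 - (p.1 : ℝ)), hgmem _ _⟩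
      continuous_toFun := hcont.subtype_mk _
      map_zero_left := ?_
      map_one_left := ?_ }⟩⟩
    · intro x
      apply Subtype.ext
      show g x (1 - ((0 : I) : ℝ)) = (x : GL (Fin n) ℝ)
      rw [Set.Icc.coe_zero, sub_zero, hg1]
    · intro x
      apply Subtype.ext
      show g x (1 - ((1 : I) : ℝ)) = 1
      rw [Set.Icc.coe_one, sub_self, hg0]
  haveI hcontr : ContractibleSpace ↥U := (contractible_iff_id_nullhomotopic ↥U).mpr hnull
  constructor
  · rw [isConnected_iff_connectedSpace]
    exact inferInstance
  · infer_instance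
end

section
/- Let p and q be distinct primes with q ≡ 3 (mod 4), and let K = ℚ(i, √p). Then q is not a square in K, and hence the special orthogonal group SO(x² + q y²) is an anisotropic torus over K. -/
open Real

private def myQ (p : ℕ) (t : ℝ) : Prop := ∃ u v : ℚ, t = u + v * Real.sqrt p

private lemma myQ_add {p : ℕ} {a b : ℝ} (ha : myQ p a) (hb : myQ p b) : myQ p (a + b) := by
  obtain ⟨u, v, rfl⟩ := ha; obtain ⟨u', v', rfl⟩ := hb
  exact ⟨u + u', v + v', by push_cast; ring⟩

private lemma myQ_mul {p : ℕ} {a b : ℝ} (ha : myQ p a) (hb : myQ p b) : myQ p (a * b) := by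
  obtain ⟨u, v, rfl⟩ := ha; obtain ⟨u', v', rfl⟩ := hb
  refine ⟨u * u' + v * v' * p, u * v' + u' * v, ?_⟩
  have h : Real.sqrt p ^ 2 = (p : ℝ) := Real.sq_sqrt (by positivity)
  push_cast
  linear_combination (v * v' : ℝ) * h

private lemma myQ_neg {p : ℕ} {a : ℝ} (ha : myQ p a) : myQ p (-a) := by
  obtain ⟨u, v, rfl⟩ := ha; exact ⟨-u, -v, by push_cast; ring⟩

private lemma myQ_rat (p : ℕ) (r : ℚ) : myQ p (r : ℝ) := ⟨r, 0, by push_cast; ring⟩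

private lemma myQ_inv {p : ℕ} (hp : p.Prime) {a : ℝ} (ha : myQ p a) : myQ p a⁻¹ := by
  obtain ⟨u, v, rfl⟩ := ha
  rcases eq_or_ne ((u : ℝ) + v * Real.sqrt p) 0 with h0 | h0
  · rw [h0]; simpa using myQ_rat p 0
  have hirr := hp.irrational_sqrt
  have hd : (u : ℚ)^2 - p * v^2 ≠ 0 := by
    intro h
    rcases eq_or_ne v 0 with rfl | hv
    · have hu : u = 0 := by
        have : u ^ 2 = 0 := by linarith [h]
        exact pow_eq_zero_iff (n := 2) (by norm_num) |>.mp this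
      exact h0 (by simp [hu])
    · apply hirr
      refine ⟨|u / v|, ?_⟩
      have h1 : ((u / v : ℚ) : ℝ) ^ 2 = (p : ℝ) := by
        have h2 : (u/v)^2 = (p:ℚ) := by rw [div_pow, div_eq_iff (pow_ne_zero 2 hv)]; linarith
        exact_mod_cast h2
      calc ((|u / v| : ℚ) : ℝ) = |((u/v : ℚ) : ℝ)| := by push_cast; ring
        _ = Real.sqrt (((u/v : ℚ) : ℝ)^2) := (Real.sqrt_sq_eq_abs _).symm
        _ = Real.sqrt p := by rw [h1]
  refine ⟨u / (u^2 - p*v^2), -v / (u^2 - p*v^2), ?_⟩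
  symm
  apply eq_inv_of_mul_eq_one_left
  have h : Real.sqrt p ^ 2 = (p : ℝ) := Real.sq_sqrt (by positivity)
  have hd' : ((u:ℝ)^2 - p*v^2) ≠ 0 := by
    intro h'; apply hd
    have : ((u^2 - p*v^2 : ℚ) : ℝ) = 0 := by push_cast; linarith
    exact_mod_cast this
  push_cast
  field_simp
  linear_combination (-(v:ℝ)^2) * h

private lemma key_real {p q : ℕ} (hp : p.Prime) (hq : q.Prime) (hpq : p ≠ q)
    {t : ℝ} (ht : myQ p t) (h : t ^ 2 = q) : False := by
  obtain ⟨u, v, rfl⟩ := ht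
  have hs : Real.sqrt p ^ 2 = (p : ℝ) := Real.sq_sqrt (by positivity)
  have key : ((2*u*v : ℚ) : ℝ) * Real.sqrt p = ((q - u^2 - p*v^2 : ℚ) : ℝ) := by
    push_cast
    linear_combination h - (v:ℝ)^2 * hs
  rcases eq_or_ne (2*u*v) 0 with h0 | h0
  · have huv : u = 0 ∨ v = 0 := by
      rcases mul_eq_zero.mp h0 with h' | h'
      · rcases mul_eq_zero.mp h' with h'' | h''
        · norm_num at h''
        · exact Or.inl h''
      · exact Or.inr h'
    rcases huv with rfl | rfl
    · -- u = 0 : p v² = q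
      have hv2 : (p : ℚ) * v^2 = q := by
        have : ((p * v^2 : ℚ) : ℝ) = ((q : ℚ) : ℝ) := by push_cast; linear_combination h - (v:ℝ)^2 * hs
        exact_mod_cast this
      have hnsq : ¬ IsSquare (p * q) := by
        rintro ⟨r, hr⟩
        have hpr : p ∣ r := hp.dvd_of_dvd_pow (n := 2) (by rw [pow_two, ← hr]; exact Dvd.intro q rfl)
        obtain ⟨k, rfl⟩ := hpr
        have : q = p * k^2 := by
          have h2 : p * q = p * (p * k^2) := by rw [hr]; ring
          exact Nat.eq_of_mul_eq_mul_left hp.pos h2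
        have : p ∣ q := ⟨k^2, this⟩
        exact hpq ((Nat.prime_dvd_prime_iff_eq hp hq).mp this)
      have hirr : Irrational (Real.sqrt ((p:ℝ) * q)) := by
        have := irrational_sqrt_natCast_iff (n := p*q) |>.mpr hnsq
        rwa [Nat.cast_mul] at this
      apply hirr
      refine ⟨|p * v|, ?_⟩
      have h1 : ((p * v : ℚ) : ℝ) ^ 2 = (p : ℝ) * q := by
        push_cast
        have : ((p:ℚ) * v^2) * p = q * p := by rw [hv2]
        have h3 : ((((p:ℚ) * v^2) * p : ℚ) : ℝ) = (((q * p : ℚ)) : ℝ) := by exact_mod_cast this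
        push_cast at h3; linarith
      calc ((|p * v| : ℚ) : ℝ) = |((p * v : ℚ) : ℝ)| := by push_cast; ring
        _ = Real.sqrt (((p * v : ℚ) : ℝ)^2) := (Real.sqrt_sq_eq_abs _).symm
        _ = Real.sqrt ((p:ℝ) * q) := by rw [h1]
    · -- v = 0 : u² = q
      have hu2 : (u : ℚ)^2 = q := by
        have : ((u^2 : ℚ) : ℝ) = ((q : ℚ) : ℝ) := by push_cast; linear_combination h
        exact_mod_cast this
      apply hq.irrational_sqrt
      refine ⟨|u|, ?_⟩
      calc ((|u| : ℚ) : ℝ) = |((u : ℚ) : ℝ)| := by push_cast; ring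
        _ = Real.sqrt (((u : ℚ) : ℝ)^2) := (Real.sqrt_sq_eq_abs _).symm
        _ = Real.sqrt q := by norm_num [show ((u:ℝ))^2 = (q:ℝ) by exact_mod_cast hu2]
  · apply hp.irrational_sqrt
    refine ⟨(q - u^2 - p*v^2) / (2*u*v), ?_⟩
    have hc : (2*(u:ℝ)*v) ≠ 0 := by exact_mod_cast h0
    push_cast
    rw [eq_comm, eq_div_iff hc]
    push_cast at key
    linarith [key]

private def myP (p : ℕ) (z : ℂ) : Prop :=
  ∃ r s : ℝ, myQ p r ∧ myQ p s ∧ z = (r : ℂ) + (s : ℂ) * Complex.I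

private lemma myP_add {p : ℕ} {z w : ℂ} (hz : myP p z) (hw : myP p w) : myP p (z + w) := by
  obtain ⟨r, s, hr, hs, rfl⟩ := hz; obtain ⟨r', s', hr', hs', rfl⟩ := hw
  exact ⟨r + r', s + s', myQ_add hr hr', myQ_add hs hs', by push_cast; ring⟩

private lemma myP_mul {p : ℕ} {z w : ℂ} (hz : myP p z) (hw : myP p w) : myP p (z * w) := by
  obtain ⟨r, s, hr, hs, rfl⟩ := hz; obtain ⟨r', s', hr', hs', rfl⟩ := hw
  refine ⟨r * r' - s * s', r * s' + r' * s, myQ_add (myQ_mul hr hr') (myQ_neg (myQ_mul hs hs')),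
    myQ_add (myQ_mul hr hs') (myQ_mul hr' hs), ?_⟩
  push_cast
  linear_combination ((s : ℂ) * s') * Complex.I_sq

private lemma myP_rat (p : ℕ) (r : ℚ) : myP p ((r : ℝ) : ℂ) :=
  ⟨(r : ℝ), 0, myQ_rat p r, by simpa using myQ_rat p 0, by push_cast; ring⟩

private lemma myP_inv {p : ℕ} (hp : p.Prime) {z : ℂ} (hz : myP p z) : myP p z⁻¹ := by
  obtain ⟨r, s, hr, hs, rfl⟩ := hz
  rcases eq_or_ne ((r : ℂ) + (s : ℂ) * Complex.I) 0 with h0 | h0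
  · rw [h0]; simpa using myP_rat p 0
  have hD : r*r + s*s ≠ 0 := by
    intro hD
    apply h0
    have hr0 : r = 0 := by nlinarith [mul_self_nonneg r, mul_self_nonneg s]
    have hs0 : s = 0 := by nlinarith [mul_self_nonneg r, mul_self_nonneg s]
    simp [hr0, hs0]
  have hDQ : myQ p ((r*r + s*s)⁻¹) :=
    myQ_inv hp (myQ_add (myQ_mul hr hr) (myQ_mul hs hs))
  refine ⟨r * (r*r+s*s)⁻¹, -(s * (r*r+s*s)⁻¹), myQ_mul hr hDQ, myQ_neg (myQ_mul hs hDQ), ?_⟩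
  symm
  apply eq_inv_of_mul_eq_one_left
  push_cast
  have hDC : ((r:ℂ)*(r:ℂ) + (s:ℂ)*(s:ℂ)) ≠ 0 := by
    intro h; apply hD
    have : (((r*r + s*s : ℝ)) : ℂ) = 0 := by push_cast; linear_combination h
    exact_mod_cast this
  rw [show ((r:ℂ) * ((r:ℂ)*(r:ℂ)+(s:ℂ)*(s:ℂ))⁻¹ + -((s:ℂ) * ((r:ℂ)*(r:ℂ)+(s:ℂ)*(s:ℂ))⁻¹) * Complex.I) * ((r:ℂ) + (s:ℂ) * Complex.I)
      = ((r:ℂ)*(r:ℂ) - (s:ℂ)*(s:ℂ) * Complex.I^2) * ((r:ℂ)*(r:ℂ)+(s:ℂ)*(s:ℂ))⁻¹ by ring,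
    Complex.I_sq]
  field_simp
  rw [div_eq_one_iff_eq (by rw [pow_two, pow_two]; exact hDC)]; ring

/-- Let `p` and `q` be distinct primes with `q ≡ 3 (mod 4)`, and let
`K = ℚ(i, √p)` (as a subfield of `ℂ`). Then `q` is not a square in `K`; hence the form
`x² + q y²` is anisotropic over `K`, i.e. `SO(x² + q y²)` is an anisotropic torus over `K`. -/
theorem q_not_square_and_form_anisotropic
    (p q : ℕ) (hp : p.Prime) (hq : q.Prime) (hpq : p ≠ q) (hq4 : q % 4 = 3)
    (K : IntermediateField ℚ ℂ)
    (hK : K = IntermediateField.adjoin ℚ ({Complex.I, ((Real.sqrt p : ℝ) : ℂ)} : Set ℂ)) :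
    (¬ ∃ x ∈ K, x ^ 2 = (q : ℂ)) ∧
      ∀ x y : ℂ, x ∈ K → y ∈ K → x ^ 2 + (q : ℂ) * y ^ 2 = 0 → x = 0 ∧ y = 0 := by
  have hmem : ∀ z ∈ K, myP p z := by
    intro z hz
    rw [hK] at hz
    induction hz using IntermediateField.adjoin_induction with
    | mem x hx =>
      rcases hx with rfl | rfl
      · exact ⟨0, 1, by simpa using myQ_rat p 0, by simpa using myQ_rat p 1, by simp⟩
      · exact ⟨Real.sqrt p, 0, ⟨0, 1, by push_cast; ring⟩, by simpa using myQ_rat p 0, by simp⟩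
    | algebraMap r => simpa using myP_rat p r
    | add x y _ _ hx hy => exact myP_add hx hy
    | inv x _ hx => exact myP_inv hp hx
    | mul x y _ _ hx hy => exact myP_mul hx hy
  have main : ¬ ∃ x ∈ K, x ^ 2 = (q : ℂ) := by
    rintro ⟨x, hxK, hx2⟩
    obtain ⟨r, s, hr, hs, rfl⟩ := hmem x hxK
    have h1 : r * r - s * s = (q : ℝ) := by
      have := congrArg Complex.re hx2
      simpa [pow_two, Complex.add_re, Complex.mul_re, Complex.mul_im] using this
    have h2 : r * s + s * r = 0 := by
      have := congrArg Complex.im hx2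
      simpa [pow_two, Complex.add_im, Complex.mul_re, Complex.mul_im] using this
    rcases mul_eq_zero.mp (by linarith [h2] : r * s = 0) with hr0 | hs0
    · -- r = 0 : -s² = q, impossible
      have : (0:ℝ) < q := by exact_mod_cast hq.pos
      nlinarith [sq_nonneg s]
    · refine key_real hp hq hpq hr ?_
      rw [hs0] at h1; rw [pow_two]; simpa using h1
  refine ⟨main, ?_⟩
  intro x y hx hy heq
  by_cases hy0 : y = 0
  · subst hy0
    have hx0 : x = 0 := by
      have : x ^ 2 = 0 := by simpa using heq
      exact pow_eq_zero_iff (by norm_num) |>.mp this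
    exact ⟨hx0, rfl⟩
  · exfalso
    apply main
    refine ⟨Complex.I * x / y, ?_, ?_⟩
    · have hI : Complex.I ∈ K := by
        rw [hK]; exact IntermediateField.subset_adjoin _ _ (by simp)
      exact K.div_mem (K.mul_mem hI hx) hy
    · have hy2 : (y:ℂ)^2 ≠ 0 := pow_ne_zero 2 hy0
      field_simp
      linear_combination -heq + (x^2 + (q:ℂ)*y^2) * Complex.I_sq + (q:ℂ)*y^2*Complex.I_sq + (-2*(q:ℂ)*y^2) * Complex.I_sq
end
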